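/- The FC-transform (η, w) ↦ (z, w) with z = η - w\bar{η} pulls the Kähler form of the Siegel–Jacobi disk back to a product form: substituting z = η - w\bar{η} into ω_{kμ} = i[2k (1-w\bar{w})^{-2} dw∧d\bar{w} + μ(1-w\bar{w})^{-1} A∧\bar{A}], A = dz + \bar{η}dw (where η = (z+\bar{z}w)/(1-w\bar{w})), yields ω_{kμ}(η,w) = i[2k(1-w\bar{w})^{-2} dw∧d\bar{w} + μ dη∧d\bar{η}]. In particular, under z = η - w\bar{η}, A = dη - w d\bar{η} and A∧\bar{A} = (1-w\bar{w}) dη∧d\bar{η}. -/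

import Mathlib

open Complex

/-- The FC-transform `(η,w) ↦ (z,w)`, `z = η - w η̄`, pulls the Kähler form of the
Siegel–Jacobi disk back to a product form. We work in the exterior algebra generated by
the differentials `dη, dη̄, dw, dw̄`: under `z = η - w η̄` one has
`dz = dη - w dη̄ - η̄ dw`, hence `A = dz + η̄ dw = dη - w dη̄`,
`A∧Ā = (1-w w̄) dη∧dη̄`, and
`i[2k P⁻² dw∧dw̄ + μ P⁻¹ A∧Ā] = i[2k P⁻² dw∧dw̄ + μ dη∧dη̄]`. -/
theorem siegelJacobi_FC_kahler (k μ : ℝ) (hk : 0 < k) (hμ : 0 < μ)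
    (η w : ℂ) (hw : ‖w‖ < 1) :
    let V := Fin 4 → ℂ
    let ι := ExteriorAlgebra.ι ℂ (M := V)
    let dη := ι (Pi.single 0 1)
    let dηb := ι (Pi.single 1 1)
    let dw := ι (Pi.single 2 1)
    let dwb := ι (Pi.single 3 1)
    let P : ℂ := 1 - w * starRingEnd ℂ w
    -- the pullback of dz under z = η - w η̄
    let dz := dη - w • dηb - (starRingEnd ℂ η) • dw
    let A := dz + (starRingEnd ℂ η) • dw
    let Ab := dηb - (starRingEnd ℂ w) • dη - η • dwb + η • dwb
    (A = dη - w • dηb) ∧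
    (A * Ab = (1 - w * starRingEnd ℂ w) • (dη * dηb)) ∧
    (Complex.I • ((2 * (k : ℂ) / P ^ 2) • (dw * dwb) + ((μ : ℂ) / P) • (A * Ab)) =
      Complex.I • ((2 * (k : ℂ) / P ^ 2) • (dw * dwb) + (μ : ℂ) • (dη * dηb))) := by
  intro V ι dη dηb dw dwb P dz A Ab
  have hA : A = dη - w • dηb := by
    show dη - w • dηb - (starRingEnd ℂ η) • dw + (starRingEnd ℂ η) • dw = _
    abel
  have hAb : Ab = dηb - (starRingEnd ℂ w) • dη := by
    show dηb - (starRingEnd ℂ w) • dη - η • dwb + η • dwb = _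
    abel
  have h1 : dη * dη = 0 := ExteriorAlgebra.ι_sq_zero _
  have h2 : dηb * dηb = 0 := ExteriorAlgebra.ι_sq_zero _
  have h3 : dηb * dη = -(dη * dηb) := by
    have h := ExteriorAlgebra.ι_add_mul_swap (R := ℂ) (Pi.single 0 (1:ℂ) : V)
      (Pi.single 1 1)
    have : dη * dηb + dηb * dη = 0 := h
    exact eq_neg_of_add_eq_zero_right this
  have hAAb : A * Ab = (1 - w * starRingEnd ℂ w) • (dη * dηb) := by
    rw [hA, hAb]
    simp only [sub_mul, mul_sub, smul_mul_assoc, mul_smul_comm, smul_smul, h1, h2, h3,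
      smul_zero, smul_neg, sub_smul, one_smul, mul_zero, zero_sub, neg_neg]
    module
  refine ⟨hA, hAAb, ?_⟩
  have hP : P ≠ 0 := by
    have : w * starRingEnd ℂ w = (Complex.normSq w : ℂ) := Complex.mul_conj w
    have hns : Complex.normSq w < 1 := by
      have := hw
      nlinarith [Complex.sq_norm w, norm_nonneg w]
    show (1 : ℂ) - w * starRingEnd ℂ w ≠ 0
    rw [this, sub_ne_zero]
    intro h
    have := congrArg Complex.re h
    simp at this
    linarith
  rw [hAAb, smul_smul]
  have : (μ : ℂ) / P * (1 - w * starRingEnd ℂ w) = (μ : ℂ) := by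
    have : (1 : ℂ) - w * starRingEnd ℂ w = P := rfl
    rw [this, div_mul_cancel₀ _ hP]
  rw [this]
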